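/- Let A : ℝⁿ → Matₙ(ℝ) be a C², ℤⁿ-periodic map taking values in symmetric positive semidefinite n×n matrices. Then there exists a constant C > 0, depending only on n and the sup-norm of the second derivatives of A, such that for every x ∈ ℝⁿ, every 1 ≤ k ≤ n, and every symmetric n×n matrix S, one has (tr(∂_{x_k}A(x)·S))² ≤ C·tr(S·A(x)·S). -/

import Mathlib

open MeasureTheory Finset

noncomputable section

/-- Partial derivative of `f` at `x` in the `i`-th coordinate direction. -/
def pd {n : ℕ} (f : (Fin n → ℝ) → ℝ) (i : Fin n) (x : Fin n → ℝ) : ℝ :=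
  fderiv ℝ f x (Pi.single i 1)

/-- Squared euclidean norm of the (spatial) gradient, `|Df(x)|²`. -/
def gradSq {n : ℕ} (f : (Fin n → ℝ) → ℝ) (x : Fin n → ℝ) : ℝ :=
  ∑ i, (pd f i x) ^ 2

/-- Laplacian of `f` at `x`. -/
def lap {n : ℕ} (f : (Fin n → ℝ) → ℝ) (x : Fin n → ℝ) : ℝ :=
  ∑ i, pd (pd f i) i x

/-- Sum of squares of all second spatial derivatives, `|D²f(x)|²`. -/
def hessSq {n : ℕ} (f : (Fin n → ℝ) → ℝ) (x : Fin n → ℝ) : ℝ :=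
  ∑ i, ∑ j, (pd (pd f i) j x) ^ 2

/-- `ℤⁿ`-periodicity of a function on `ℝⁿ`. -/
def ZPer {n : ℕ} (f : (Fin n → ℝ) → ℝ) : Prop :=
  ∀ (x : Fin n → ℝ) (k : Fin n → ℤ), f (x + fun i => (k i : ℝ)) = f x

/-- `i`-th component of `D_pH(x,p)`. -/
def DpH {n : ℕ} (H : (Fin n → ℝ) → (Fin n → ℝ) → ℝ) (x p : Fin n → ℝ) (i : Fin n) : ℝ :=
  fderiv ℝ (fun q => H x q) p (Pi.single i 1)

/-- `i`-th component of `D_xH(x,p)`. -/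
def DxH {n : ℕ} (H : (Fin n → ℝ) → (Fin n → ℝ) → ℝ) (x p : Fin n → ℝ) (i : Fin n) : ℝ :=
  fderiv ℝ (fun y => H y p) x (Pi.single i 1)

/-- `(i,j)` entry of the Hessian in `p`, `D²_{pp}H(x,p)`. -/
def D2pH {n : ℕ} (H : (Fin n → ℝ) → (Fin n → ℝ) → ℝ) (x p : Fin n → ℝ) (i j : Fin n) : ℝ :=
  fderiv ℝ (fun q => DpH H x q i) p (Pi.single j 1)

/-- Spatial gradient of a time-dependent function. -/
def Dsp {n : ℕ} (w : (Fin n → ℝ) → ℝ → ℝ) (x : Fin n → ℝ) (t : ℝ) : Fin n → ℝ :=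
  fun i => pd (fun y => w y t) i x

/-- The unit cube `Q = [0,1]ⁿ`, a fundamental domain for the torus `𝕋ⁿ`. -/
def cube (n : ℕ) : Set (Fin n → ℝ) := Set.Icc 0 1

/-! ### Auxiliary lemmas -/

/-- Nonnegative function with bounded second derivative: `g'(0)² ≤ 4 M g(0)`. -/
theorem aux_scalar_key {g g1 g2 : ℝ → ℝ} {M : ℝ} (hM : 0 < M)
    (hg0 : ∀ t, 0 ≤ g t)
    (hg1 : ∀ t, HasDerivAt g (g1 t) t)
    (hg2 : ∀ t, HasDerivAt g1 (g2 t) t)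
    (hb : ∀ t, |g2 t| ≤ M) :
    (g1 0) ^ 2 ≤ 4 * M * g 0 := by
  have hlip : ∀ t : ℝ, |g1 t - g1 0| ≤ M * |t| := by
    intro t
    have := Convex.norm_image_sub_le_of_norm_hasDerivWithin_le
      (f := g1) (f' := g2) (s := Set.univ) (C := M)
      (fun x _ => (hg2 x).hasDerivWithinAt)
      (fun x _ => by simpa using hb x) convex_univ (Set.mem_univ 0) (Set.mem_univ t)
    simpa using this
  have htaylor : ∀ t : ℝ, g t ≤ g 0 + g1 0 * t + M * t ^ 2 := by
    intro t
    have key := Convex.norm_image_sub_le_of_norm_hasDerivWithin_le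
      (f := fun s => g s - g1 0 * s) (f' := fun s => g1 s - g1 0)
      (s := Set.uIcc 0 t) (C := M * |t|)
      (fun x _ => (((hg1 x).sub ((hasDerivAt_id x).const_mul (g1 0))).congr_deriv
        (by ring)).hasDerivWithinAt)
      (fun x hx => by
        have h1 := hlip x
        have h2 : |x| ≤ |t| := by
          rcases Set.mem_uIcc.1 hx with h | h <;> rw [abs_le] <;>
            constructor <;> nlinarith [abs_nonneg t, le_abs_self t, neg_abs_le t]
        calc ‖g1 x - g1 0‖ ≤ M * |x| := h1
          _ ≤ M * |t| := by nlinarith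
        )
      (convex_uIcc 0 t) Set.left_mem_uIcc Set.right_mem_uIcc
    simp only [Real.norm_eq_abs, mul_zero, sub_zero] at key
    have := abs_le.1 key
    have h3 : |t| * |t| = t ^ 2 := by rw [abs_mul_abs_self]; ring
    nlinarith [this.2]
  set t := -(g1 0) / (2 * M) with htdef
  have h := htaylor t
  have h0 := hg0 t
  have hM' : M ≠ 0 := ne_of_gt hM
  have ht : g 0 + g1 0 * t + M * t ^ 2 = g 0 - (g1 0) ^ 2 / (4 * M) := by
    rw [htdef]; field_simp; ring
  rw [ht] at h
  have : 0 ≤ g 0 - (g1 0) ^ 2 / (4 * M) := le_trans h0 h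
  have h4 : (g1 0) ^ 2 / (4 * M) ≤ g 0 := by linarith
  calc (g1 0) ^ 2 = (4 * M) * ((g1 0) ^ 2 / (4 * M)) := by field_simp
    _ ≤ 4 * M * g 0 := by nlinarith

/-- `pd f i` is `C^m` if `f` is `C^(m+1)`. -/
theorem aux_pd_contDiff {n : ℕ} {f : (Fin n → ℝ) → ℝ} {m : ℕ} (hf : ContDiff ℝ (m + 1) f)
    (i : Fin n) : ContDiff ℝ m (pd f i) := by
  have h1 : ContDiff ℝ m (fderiv ℝ f) := hf.fderiv_right (by norm_cast)
  exact (ContinuousLinearMap.apply ℝ ℝ (Pi.single i 1)).contDiff.comp h1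

/-- Partial derivatives of periodic functions are periodic. -/
theorem aux_pd_zper {n : ℕ} {f : (Fin n → ℝ) → ℝ} (hf : Differentiable ℝ f) (hp : ZPer f)
    (i : Fin n) : ZPer (pd f i) := by
  intro x k
  unfold pd
  have hcomp : (fun y => f (y + fun i => (k i : ℝ))) = f := funext fun y => hp y k
  have h1 : fderiv ℝ (fun y => f (y + fun i => (k i : ℝ))) x
      = fderiv ℝ f (x + fun i => (k i : ℝ)) := by
    have hd : HasFDerivAt (fun y : Fin n → ℝ => y + fun i => (k i : ℝ))
        (ContinuousLinearMap.id ℝ (Fin n → ℝ)) x := (hasFDerivAt_id x).add_const _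
    have := ((hf _).hasFDerivAt.comp x hd).fderiv
    simpa [Function.comp_def] using this
  rw [← h1, hcomp]

/-- A continuous ℤⁿ-periodic function is bounded. -/
theorem aux_zper_bounded {n : ℕ} {f : (Fin n → ℝ) → ℝ} (hc : Continuous f) (hp : ZPer f) :
    ∃ M : ℝ, ∀ x, |f x| ≤ M := by
  obtain ⟨M, hM⟩ := (isCompact_Icc (a := (0 : Fin n → ℝ)) (b := 1)).exists_bound_of_continuousOn
    hc.continuousOn
  refine ⟨M, fun x => ?_⟩
  have hx : f x = f (fun i => Int.fract (x i)) := by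
    have := hp (fun i => Int.fract (x i)) (fun i => ⌊x i⌋)
    rw [← this]
    congr 1
    funext i
    simp only [Pi.add_apply]
    exact (Int.fract_add_floor (x i)).symm
  rw [hx]
  have : (fun i => Int.fract (x i)) ∈ Set.Icc (0 : Fin n → ℝ) 1 := by
    constructor <;> intro i
    · exact Int.fract_nonneg _
    · exact le_of_lt (Int.fract_lt_one _)
  simpa using hM _ this

/-- Chain rule along a coordinate line. -/
theorem aux_hasDerivAt_line {n : ℕ} {f : (Fin n → ℝ) → ℝ} (hf : Differentiable ℝ f)
    (x : Fin n → ℝ) (k : Fin n) (t : ℝ) :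
    HasDerivAt (fun s : ℝ => f (x + s • (Pi.single k 1 : Fin n → ℝ)))
      (pd f k (x + t • (Pi.single k 1 : Fin n → ℝ))) t := by
  have hline : HasDerivAt (fun s : ℝ => x + s • (Pi.single k 1 : Fin n → ℝ))
      (Pi.single k 1 : Fin n → ℝ) t := by
    simpa using ((hasDerivAt_id t).smul_const (Pi.single k 1 : Fin n → ℝ)).const_add x
  exact (hf _).hasFDerivAt.comp_hasDerivAt t hline

/-- Key quadratic-form estimate along coordinate lines. -/
theorem aux_quad_key {n : ℕ} (A : (Fin n → ℝ) → Matrix (Fin n) (Fin n) ℝ)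
    (hA : ∀ i j, ContDiff ℝ 2 (fun x => A x i j))
    (hApsd : ∀ x, (A x).PosSemidef)
    (k : Fin n) {M : ℝ} (hM : 0 < M)
    (hbd : ∀ i j x, |pd (pd (fun y => A y i j) k) k x| ≤ M)
    (x : Fin n → ℝ) (ξ : Fin n → ℝ) (hξ : ∑ i, ξ i ^ 2 = 1) :
    (∑ i, ∑ j, ξ i * ξ j * pd (fun y => A y i j) k x) ^ 2
      ≤ 4 * (M * n) * (∑ i, ∑ j, ξ i * ξ j * A x i j) := by
  have hn : 0 < n := by
    rcases Nat.eq_zero_or_pos n with h | h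
    · subst h; simp at hξ
    · exact h
  have hdiff : ∀ i j, Differentiable ℝ (fun y => A y i j) := fun i j =>
    (hA i j).differentiable (by norm_num)
  have hA2 : ∀ i j, ContDiff ℝ (1 + 1) (fun x => A x i j) := by
    intro i j; have := hA i j; norm_num at this ⊢; exact this
  have hdiff1 : ∀ i j, Differentiable ℝ (pd (fun y => A y i j) k) := fun i j =>
    (aux_pd_contDiff (hA2 i j) k).differentiable (by norm_num)
  set e : Fin n → ℝ := (Pi.single k 1 : Fin n → ℝ) with he
  set g : ℝ → ℝ := fun t => ∑ i, ∑ j, ξ i * ξ j * A (x + t • e) i j with hg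
  set g1 : ℝ → ℝ := fun t => ∑ i, ∑ j, ξ i * ξ j * pd (fun y => A y i j) k (x + t • e) with hg1
  set g2 : ℝ → ℝ := fun t =>
    ∑ i, ∑ j, ξ i * ξ j * pd (pd (fun y => A y i j) k) k (x + t • e) with hg2
  have habs : (∑ i, |ξ i|) ^ 2 ≤ n := by
    have := Finset.sum_mul_sq_le_sq_mul_sq Finset.univ (fun i => |ξ i|) (fun _ => 1)
    simp only [mul_one, one_pow, Finset.sum_const, Finset.card_univ, Fintype.card_fin,
      sq_abs, nsmul_eq_mul, hξ] at this
    simpa using this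
  have key := aux_scalar_key (g := g) (g1 := g1) (g2 := g2) (M := M * n)
    (by positivity)
    (fun t => by
      have := (hApsd (x + t • e)).dotProduct_mulVec_nonneg ξ
      simp only [dotProduct, Matrix.mulVec, dotProduct, RCLike.star_def] at this
      rw [hg]
      simp only []
      convert this using 1
      · rfl
      refine Finset.sum_congr rfl fun i _ => ?_
      rw [Finset.mul_sum]
      refine Finset.sum_congr rfl fun j _ => ?_
      simp only [star_trivial]
      ring)
    (fun t => by
      rw [hg, hg1]
      simp only []
      exact HasDerivAt.fun_sum fun i _ => HasDerivAt.fun_sum fun j _ =>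
        (aux_hasDerivAt_line (hdiff i j) x k t).const_mul _)
    (fun t => by
      rw [hg1, hg2]
      simp only []
      exact HasDerivAt.fun_sum fun i _ => HasDerivAt.fun_sum fun j _ =>
        (aux_hasDerivAt_line (hdiff1 i j) x k t).const_mul _)
    (fun t => by
      rw [hg2]
      simp only []
      calc |∑ i, ∑ j, ξ i * ξ j * pd (pd (fun y => A y i j) k) k (x + t • e)|
          ≤ ∑ i, ∑ j, |ξ i * ξ j * pd (pd (fun y => A y i j) k) k (x + t • e)| := by
            exact le_trans (Finset.abs_sum_le_sum_abs _ _)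
              (Finset.sum_le_sum fun i _ => Finset.abs_sum_le_sum_abs _ _)
        _ ≤ ∑ i, ∑ j, |ξ i| * |ξ j| * M := by
            refine Finset.sum_le_sum fun i _ => Finset.sum_le_sum fun j _ => ?_
            rw [abs_mul, abs_mul]
            exact mul_le_mul_of_nonneg_left (hbd i j _) (by positivity)
        _ = (∑ i, |ξ i|) ^ 2 * M := by
            rw [sq, Finset.sum_mul_sum, Finset.sum_mul]
            exact (Finset.sum_congr rfl fun i _ => by rw [Finset.sum_mul]).symm
        _ ≤ M * n := le_trans (mul_le_mul_of_nonneg_right habs hM.le) (by rw [mul_comm]) )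
  have h0 : g 0 = ∑ i, ∑ j, ξ i * ξ j * A x i j := by rw [hg]; simp
  have h1 : g1 0 = ∑ i, ∑ j, ξ i * ξ j * pd (fun y => A y i j) k x := by rw [hg1]; simp
  rw [h0, h1] at key
  exact key

theorem aux_conj_entry {n : ℕ} (U B : Matrix (Fin n) (Fin n) ℝ) (m : Fin n) :
    (star U * B * U) m m = ∑ i, ∑ j, U i m * U j m * B j i := by
  calc (star U * B * U) m m = ∑ p, (∑ q, (star U) m q * B q p) * U p m := by
        simp [Matrix.mul_apply]
    _ = ∑ i, ∑ j, U i m * U j m * B j i := by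
        refine Finset.sum_congr rfl fun p _ => ?_
        rw [Finset.sum_mul]
        refine Finset.sum_congr rfl fun q _ => ?_
        simp only [Matrix.star_apply, star_trivial]
        ring

theorem aux_trace_mul_diag {n : ℕ} (M : Matrix (Fin n) (Fin n) ℝ) (d : Fin n → ℝ) :
    Matrix.trace (M * Matrix.diagonal d) = ∑ m, M m m * d m := by
  rw [Matrix.trace]
  exact Finset.sum_congr rfl fun m _ => by rw [Matrix.diag_apply, Matrix.mul_diagonal]

theorem aux_trace_formulas {n : ℕ} (U S B : Matrix (Fin n) (Fin n) ℝ) (lam : Fin n → ℝ)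
    (hspec : S = U * Matrix.diagonal lam * star U) :
    Matrix.trace (B * S)
      = ∑ m, lam m * (∑ i, ∑ j, U i m * U j m * B j i) := by
  rw [hspec,
    show B * (U * Matrix.diagonal lam * star U)
      = (B * U * Matrix.diagonal lam) * star U by simp only [Matrix.mul_assoc],
    Matrix.trace_mul_comm,
    show star U * (B * U * Matrix.diagonal lam)
      = (star U * B * U) * Matrix.diagonal lam by simp only [Matrix.mul_assoc],
    aux_trace_mul_diag]
  exact Finset.sum_congr rfl fun m _ => by rw [aux_conj_entry, mul_comm]

theorem aux_trace_formulas2 {n : ℕ} (U S A2 : Matrix (Fin n) (Fin n) ℝ) (lam : Fin n → ℝ)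
    (hspec : S = U * Matrix.diagonal lam * star U)
    (hunit : star U * U = 1) :
    Matrix.trace (S * A2 * S)
      = ∑ m, (lam m) ^ 2 * (∑ i, ∑ j, U i m * U j m * A2 i j) := by
  rw [hspec]
  have h1 : U * Matrix.diagonal lam * star U * A2 * (U * Matrix.diagonal lam * star U)
      = (U * (Matrix.diagonal lam * (star U * A2 * U) * Matrix.diagonal lam)) * star U := by
    simp only [Matrix.mul_assoc]
  rw [h1, Matrix.trace_mul_comm, ← Matrix.mul_assoc, hunit, Matrix.one_mul]
  have h2 : Matrix.trace (Matrix.diagonal lam * (star U * A2 * U) * Matrix.diagonal lam)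
      = ∑ m, lam m * (star U * A2 * U) m m * lam m := by
    rw [aux_trace_mul_diag]
    exact Finset.sum_congr rfl fun m _ => by rw [Matrix.diagonal_mul]
  rw [h2]
  refine Finset.sum_congr rfl fun m _ => ?_
  rw [aux_conj_entry, Finset.sum_comm]
  rw [Finset.mul_sum, Finset.sum_mul, Finset.mul_sum]
  refine Finset.sum_congr rfl fun i _ => ?_
  rw [Finset.mul_sum, Finset.sum_mul, Finset.mul_sum]
  exact Finset.sum_congr rfl fun j _ => by ring

theorem aux_unit_col {n : ℕ} (U : Matrix (Fin n) (Fin n) ℝ)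
    (hunit : star U * U = 1) (m : Fin n) :
    ∑ i, (U i m) ^ 2 = 1 := by
  have := congrFun (congrFun hunit m) m
  rw [Matrix.mul_apply] at this
  simp only [Matrix.star_apply, star_trivial, Matrix.one_apply_eq] at this
  rw [← this]
  exact Finset.sum_congr rfl fun i _ => by ring

theorem stmt_2 {n : ℕ} (A : (Fin n → ℝ) → Matrix (Fin n) (Fin n) ℝ)
    (hA : ∀ i j, ContDiff ℝ 2 (fun x => A x i j))
    (hAper : ∀ i j, ZPer (fun x => A x i j))
    (hApsd : ∀ x, (A x).PosSemidef) :
    ∃ C > 0, ∀ (x : Fin n → ℝ) (k : Fin n) (S : Matrix (Fin n) (Fin n) ℝ), S.IsSymm →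
      (Matrix.trace ((Matrix.of fun i j => pd (fun y => A y i j) k x) * S)) ^ 2
        ≤ C * Matrix.trace (S * A x * S) := by
  classical
  -- smoothness facts
  have hdiff : ∀ i j, Differentiable ℝ (fun y => A y i j) := fun i j =>
    (hA i j).differentiable (by norm_num)
  have hA2 : ∀ i j, ContDiff ℝ (1 + 1) (fun x => A x i j) := by
    intro i j; have := hA i j; norm_num at this ⊢; exact this
  have hdiff1 : ∀ (i j : Fin n) (k : Fin n), Differentiable ℝ (pd (fun y => A y i j) k) :=
    fun i j k => (aux_pd_contDiff (hA2 i j) k).differentiable (by norm_num)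
  have hcont2 : ∀ (i j k : Fin n), Continuous (pd (pd (fun y => A y i j) k) k) := by
    intro i j k
    have h1 : ContDiff ℝ (1 : ℕ) (pd (fun y => A y i j) k) := aux_pd_contDiff (hA2 i j) k
    have h2 : ContDiff ℝ ((0 : ℕ)) (pd (pd (fun y => A y i j) k) k) :=
      aux_pd_contDiff (by exact_mod_cast h1) k
    exact h2.continuous
  have hper2 : ∀ (i j k : Fin n), ZPer (pd (pd (fun y => A y i j) k) k) := fun i j k =>
    aux_pd_zper (hdiff1 i j k) (aux_pd_zper (hdiff i j) (hAper i j) k) k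
  -- bound on second derivatives
  have hbdd : ∀ i j k : Fin n, ∃ Mv : ℝ, ∀ x, |pd (pd (fun y => A y i j) k) k x| ≤ Mv :=
    fun i j k => aux_zper_bounded (hcont2 i j k) (hper2 i j k)
  choose Mv hMv using hbdd
  set M : ℝ := 1 + ∑ t : Fin n × Fin n × Fin n, |Mv t.1 t.2.1 t.2.2| with hMdef
  have hMpos : 0 < M := by
    have : (0:ℝ) ≤ ∑ t : Fin n × Fin n × Fin n, |Mv t.1 t.2.1 t.2.2| :=
      Finset.sum_nonneg fun t _ => abs_nonneg _
    rw [hMdef]; linarith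
  have hMbd : ∀ (i j k : Fin n) (x : Fin n → ℝ), |pd (pd (fun y => A y i j) k) k x| ≤ M := by
    intro i j k x
    have h1 : |Mv i j k| ≤ ∑ t : Fin n × Fin n × Fin n, |Mv t.1 t.2.1 t.2.2| :=
      Finset.single_le_sum (f := fun t : Fin n × Fin n × Fin n => |Mv t.1 t.2.1 t.2.2|)
        (fun t _ => abs_nonneg _) (Finset.mem_univ (i, j, k))
    exact le_trans (hMv i j k x) (le_trans (le_abs_self _) (by rw [hMdef]; linarith))
  set K : ℝ := 4 * (M * n) with hKdef
  have hK : 0 ≤ K := by positivity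
  refine ⟨K * n + 1, by positivity, fun x k S hS => ?_⟩
  -- spectral decomposition of S
  have hSh : S.IsHermitian := by
    have h : S.conjTranspose = S.transpose := by
      ext i j; simp [Matrix.conjTranspose_apply, Matrix.transpose_apply]
    unfold Matrix.IsHermitian
    rw [h]
    exact hS
  set U : Matrix (Fin n) (Fin n) ℝ := (hSh.eigenvectorUnitary : Matrix (Fin n) (Fin n) ℝ)
    with hU
  set lam : Fin n → ℝ := hSh.eigenvalues with hlam
  have hspec : S = U * Matrix.diagonal lam * star U := by
    have := hSh.spectral_theorem
    simpa using this
  have hunit : star U * U = 1 := Matrix.mem_unitaryGroup_iff'.mp hSh.eigenvectorUnitary.2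
  set B : Matrix (Fin n) (Fin n) ℝ := Matrix.of fun i j => pd (fun y => A y i j) k x with hB
  set q : Fin n → ℝ := fun m => ∑ i, ∑ j, U i m * U j m * B j i with hq
  set a : Fin n → ℝ := fun m => ∑ i, ∑ j, U i m * U j m * A x i j with ha
  rw [aux_trace_formulas U S B lam hspec, aux_trace_formulas2 U S (A x) lam hspec hunit]
  -- key estimates
  have hqa : ∀ m, (q m) ^ 2 ≤ K * a m := by
    intro m
    have hcol : ∑ i, (U i m) ^ 2 = 1 := aux_unit_col U hunit m
    have key := aux_quad_key A hA hApsd k hMpos (fun i j y => hMbd i j k y) x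
      (fun i => U i m) hcol
    have hq' : q m = ∑ i, ∑ j, U i m * U j m * pd (fun y => A y i j) k x := by
      rw [hq]
      simp only []
      rw [Finset.sum_comm]
      refine Finset.sum_congr rfl fun i _ => Finset.sum_congr rfl fun j _ => ?_
      rw [hB]
      simp only [Matrix.of_apply]
      ring
    rw [hq', hKdef]
    exact key
  have ha0 : ∀ m, 0 ≤ a m := by
    intro m
    have := (hApsd x).dotProduct_mulVec_nonneg (fun i => U i m)
    simp only [dotProduct, Matrix.mulVec, dotProduct, RCLike.star_def] at this
    rw [ha]
    simp only []
    convert this using 1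
    · rfl
    refine Finset.sum_congr rfl fun i _ => ?_
    rw [Finset.mul_sum]
    refine Finset.sum_congr rfl fun j _ => ?_
    simp only [star_trivial]
    ring
  -- Cauchy-Schwarz assembly
  have habs : ∀ m, |lam m * q m| ≤ |lam m| * (Real.sqrt K * Real.sqrt (a m)) := by
    intro m
    rw [abs_mul]
    refine mul_le_mul_of_nonneg_left ?_ (abs_nonneg _)
    have h1 : (q m) ^ 2 ≤ K * a m := hqa m
    have h2 : |q m| = Real.sqrt ((q m) ^ 2) := by rw [Real.sqrt_sq_eq_abs]
    rw [h2, ← Real.sqrt_mul hK]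
    exact Real.sqrt_le_sqrt h1
  have hT2 : 0 ≤ ∑ m, (lam m) ^ 2 * a m :=
    Finset.sum_nonneg fun m _ => mul_nonneg (sq_nonneg _) (ha0 m)
  have hcs : (∑ m, |lam m| * Real.sqrt (a m)) ^ 2 ≤ (n : ℝ) * ∑ m, (lam m) ^ 2 * a m := by
    have := Finset.sum_mul_sq_le_sq_mul_sq Finset.univ
      (fun m => |lam m| * Real.sqrt (a m)) (fun _ => 1)
    simp only [mul_one, one_pow, Finset.sum_const, Finset.card_univ, Fintype.card_fin,
      nsmul_eq_mul] at this
    calc (∑ m, |lam m| * Real.sqrt (a m)) ^ 2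
        ≤ (∑ m, (|lam m| * Real.sqrt (a m)) ^ 2) * n := this
      _ = (n : ℝ) * ∑ m, (lam m) ^ 2 * a m := by
          rw [mul_comm]
          congr 1
          refine Finset.sum_congr rfl fun m _ => ?_
          rw [mul_pow, sq_abs, Real.sq_sqrt (ha0 m)]
  calc (∑ m, lam m * q m) ^ 2
      ≤ (∑ m, |lam m * q m|) ^ 2 := by
        rw [← sq_abs (∑ m, lam m * q m)]
        have h1 : |∑ m, lam m * q m| ≤ ∑ m, |lam m * q m| := Finset.abs_sum_le_sum_abs _ _
        have h2 : (0:ℝ) ≤ |∑ m, lam m * q m| := abs_nonneg _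
        nlinarith
    _ ≤ (∑ m, |lam m| * (Real.sqrt K * Real.sqrt (a m))) ^ 2 := by
        have h1 : ∑ m, |lam m * q m| ≤ ∑ m, |lam m| * (Real.sqrt K * Real.sqrt (a m)) :=
          Finset.sum_le_sum fun m _ => habs m
        have h2 : (0:ℝ) ≤ ∑ m, |lam m * q m| := Finset.sum_nonneg fun m _ => abs_nonneg _
        nlinarith
    _ = K * (∑ m, |lam m| * Real.sqrt (a m)) ^ 2 := by
        rw [show ∑ m, |lam m| * (Real.sqrt K * Real.sqrt (a m))
            = Real.sqrt K * ∑ m, |lam m| * Real.sqrt (a m) by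
          rw [Finset.mul_sum]; exact Finset.sum_congr rfl fun m _ => by ring]
        rw [mul_pow, Real.sq_sqrt hK]
    _ ≤ K * ((n : ℝ) * ∑ m, (lam m) ^ 2 * a m) := mul_le_mul_of_nonneg_left hcs hK
    _ ≤ (K * n + 1) * ∑ m, (lam m) ^ 2 * a m := by nlinarith

end
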